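/- Let A be a commutative fusion ring satisfying the split semisimplicity, *-character, and trace decomposition assumptions. Fix a character δ with δ(b_i) ≠ 0 for all i, set D := α_δ, D_ρ := D/α_ρ, λ_s(ρ,i) := D^s · D_ρ^{1−s} · ρ(b_i)/δ(b_i), I_n(ρ₁,…,ρ_n) := Σ_{i∈I} δ(b_i)^{2−n} ρ₁(b_i)⋯ρ_n(b_i), and J_{n,s}(ρ₁,…,ρ_n) := D^{(n−2)s} (D_{ρ₁}⋯D_{ρ_n})^{1−s} I_n(ρ₁,…,ρ_n), where s is a rational number with s ≥ 0. Then the following are equivalent: (a) λ_s(ρ,i) is an algebraic integer for every character ρ and every i ∈ I; (b) for every n ≥ 2 and all characters ρ₁, …, ρ_n of A_ℂ, the number J_{n,s}(ρ₁,…,ρ_n)/(D_{ρ₁}·D_{ρ₂})^{1−s} is an algebraic integer. -/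

import Mathlib

open scoped BigOperators

/-- A fusion ring datum: finite index set `I`, unit index `zero`, duality involution `dual`,
and structure constants `N` satisfying associativity, unit, duality and symmetry axioms. -/
structure FusionData (I : Type*) [Fintype I] [DecidableEq I] where
  zero : I
  dual : I → I
  N : I → I → I → ℕ
  dual_dual : ∀ i, dual (dual i) = i
  dual_zero : dual zero = zero
  assoc : ∀ i j k l, ∑ m, N i j m * N m k l = ∑ m, N j k m * N i m l
  unit_left : ∀ j m, N zero j m = if j = m then 1 else 0
  unit_right : ∀ i m, N i zero m = if i = m then 1 else 0
  duality : ∀ i j, N i j zero = if j = dual i then 1 else 0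
  sym1 : ∀ i j m, N i j m = N j (dual m) (dual i)
  sym2 : ∀ i j m, N i j m = N (dual m) i (dual j)
  sym3 : ∀ i j m, N i j m = N (dual j) (dual i) (dual m)

/-- The formal codegree `α_ρ = ∑ i, |ρ (b i)|²` of a character `ρ` of the complexified
fusion ring, given as a ℂ-algebra `A` with basis `b`. -/
noncomputable def formalCodegree {I : Type*} [Fintype I] {A : Type*} [CommRing A] [Algebra ℂ A]
    (b : Module.Basis I ℂ A) (ρ : A →ₐ[ℂ] ℂ) : ℝ :=
  ∑ i, Complex.normSq (ρ (b i))

private lemma aux_integral_of_powers_mem {x : ℂ} (F : Submodule ℤ ℂ) (hF : F.FG)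
    (h : ∀ M : ℕ, x ^ M ∈ F) : IsIntegral ℤ x := by
  have hP : Subalgebra.toSubmodule (Algebra.adjoin ℤ ({x} : Set ℂ)) ≤ F := by
    intro z hz
    rw [Subalgebra.mem_toSubmodule, Algebra.adjoin_singleton_eq_range_aeval] at hz
    obtain ⟨p, rfl⟩ := hz
    show Polynomial.aeval x p ∈ F
    rw [Polynomial.aeval_eq_sum_range]
    exact Submodule.sum_mem _ fun k _ => Submodule.smul_mem _ _ (h k)
  haveI := isNoetherian_of_fg_of_noetherian F hF
  have hfg : (Subalgebra.toSubmodule (Algebra.adjoin ℤ ({x} : Set ℂ))).FG := by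
    have h1 := IsNoetherian.noetherian (Submodule.comap F.subtype
      (Subalgebra.toSubmodule (Algebra.adjoin ℤ ({x} : Set ℂ))))
    have h2 := h1.map F.subtype
    rwa [Submodule.map_comap_subtype, inf_eq_right.mpr hP] at h2
  exact IsIntegral.of_mem_of_fg _ hfg x (Algebra.subset_adjoin rfl)

private lemma aux_numberfield_module (S : Set ℂ) (hfin : S.Finite)
    (halg : ∀ z ∈ S, IsIntegral ℚ z) :
    ∃ F : Submodule ℤ ℂ, F.FG ∧ ∀ z : ℂ, IsIntegral ℤ z →
      z ∈ IntermediateField.adjoin ℚ S → z ∈ F := by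
  haveI := hfin.to_subtype
  haveI : FiniteDimensional ℚ (IntermediateField.adjoin ℚ S) :=
    IntermediateField.finiteDimensional_adjoin halg
  set E := IntermediateField.adjoin ℚ S with hE
  haveI : NumberField E := ⟨⟩
  let φ : NumberField.RingOfIntegers E →ₗ[ℤ] ℂ :=
    ((algebraMap E ℂ).comp (algebraMap (NumberField.RingOfIntegers E) E)).toIntAlgHom.toLinearMap
  refine ⟨Submodule.map φ ⊤,
    (IsNoetherian.noetherian (⊤ : Submodule ℤ (NumberField.RingOfIntegers E))).map φ, ?_⟩
  intro z hzint hzmem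
  have hint' : IsIntegral ℤ (⟨z, hzmem⟩ : E) := by
    rw [← isIntegral_algebraMap_iff (B := ℂ) (algebraMap (↥E) ℂ).injective]
    exact hzint
  exact ⟨⟨⟨z, hzmem⟩, hint'⟩, trivial, rfl⟩

private theorem aux_rev {I : Type*} [Fintype I] [DecidableEq I]
    (u : I → ℂ) (xv : I → ℂ) (j : I)
    (hualg : ∀ i, IsIntegral ℚ (u i)) (hxalg : ∀ i, IsIntegral ℚ (xv i))
    (hU : (∑ i ∈ Finset.univ.filter (fun i => xv i = xv j), u i) ≠ 0)
    (hy : ∀ m : ℕ, IsIntegral ℤ (∑ i, u i * xv i ^ m)) :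
    IsIntegral ℤ (xv j) := by
  classical
  set U : ℂ := ∑ i ∈ Finset.univ.filter (fun i => xv i = xv j), u i with hUdef
  obtain ⟨Fm, hFfg, hFmem⟩ := aux_numberfield_module (Set.range u ∪ Set.range xv)
    ((Set.finite_range u).union (Set.finite_range xv))
    (by rintro z (⟨i, rfl⟩ | ⟨i, rfl⟩); exacts [hualg i, hxalg i])
  have hymem : ∀ m : ℕ, (∑ i, u i * xv i ^ m) ∈ Fm := by
    intro m
    refine hFmem _ (hy m) ?_
    refine sum_mem fun i _ => mul_mem ?_ (pow_mem ?_ m)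
    · exact IntermediateField.subset_adjoin ℚ (Set.range u ∪ Set.range xv) (Or.inl ⟨i, rfl⟩)
    · exact IntermediateField.subset_adjoin ℚ (Set.range u ∪ Set.range xv) (Or.inr ⟨i, rfl⟩)
  set zs : Finset ℂ := Finset.image xv Finset.univ with hzs
  set ℓ : Polynomial ℂ := Lagrange.basis zs id (xv j) with hℓ
  have hval : ∀ i : I, ℓ.eval (xv i) = if xv i = xv j then 1 else 0 := by
    intro i
    by_cases h : xv i = xv j
    · rw [h, if_pos rfl]
      have := Lagrange.eval_basis_self (v := id) (s := zs) (Set.injOn_id _)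
        (Finset.mem_image_of_mem xv (Finset.mem_univ j))
      simpa using this
    · rw [if_neg h]
      have := Lagrange.eval_basis_of_ne (v := id) (s := zs) (Ne.symm h)
        (Finset.mem_image_of_mem xv (Finset.mem_univ i))
      simpa using this
  set d : ℕ := ℓ.natDegree + 1 with hd
  have hkey : ∀ M : ℕ, U * xv j ^ M
      = ∑ k ∈ Finset.range d, ℓ.coeff k * ∑ i, u i * xv i ^ (M + k) := by
    intro M
    have h1 : ∀ i : I, ∑ k ∈ Finset.range d, ℓ.coeff k * (u i * xv i ^ (M + k))
        = u i * xv i ^ M * ℓ.eval (xv i) := by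
      intro i
      rw [Polynomial.eval_eq_sum_range, Finset.mul_sum]
      refine Finset.sum_congr rfl fun k _ => ?_
      rw [pow_add]; ring
    calc U * xv j ^ M = ∑ i ∈ Finset.univ.filter (fun i => xv i = xv j), u i * xv j ^ M := by
          rw [hUdef, Finset.sum_mul]
      _ = ∑ i, (if xv i = xv j then u i * xv j ^ M else 0) := by
          rw [Finset.sum_filter]
      _ = ∑ i, u i * xv i ^ M * ℓ.eval (xv i) := by
          refine Finset.sum_congr rfl fun i _ => ?_
          rw [hval i]
          split_ifs with h
          · rw [h, mul_one]
          · rw [mul_zero]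
      _ = ∑ i, ∑ k ∈ Finset.range d, ℓ.coeff k * (u i * xv i ^ (M + k)) := by
          refine Finset.sum_congr rfl fun i _ => (h1 i).symm
      _ = ∑ k ∈ Finset.range d, ℓ.coeff k * ∑ i, u i * xv i ^ (M + k) := by
          rw [Finset.sum_comm]
          refine Finset.sum_congr rfl fun k _ => ?_
          rw [Finset.mul_sum]
  set F2 : Submodule ℤ ℂ := (Finset.range d).sup
    (fun k => Submodule.map (LinearMap.mulLeft ℤ (U⁻¹ * ℓ.coeff k)) Fm) with hF2
  have hF2fg : F2.FG := by
    rw [hF2]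
    induction (Finset.range d) using Finset.cons_induction with
    | empty => simpa using Submodule.fg_bot
    | cons a t hat ih =>
      rw [Finset.sup_cons]
      exact Submodule.FG.sup (hFfg.map _) ih
  have hpow : ∀ M : ℕ, xv j ^ M ∈ F2 := by
    intro M
    have h2 : xv j ^ M = ∑ k ∈ Finset.range d,
        (U⁻¹ * ℓ.coeff k) * ∑ i, u i * xv i ^ (M + k) := by
      have h3 := hkey M
      rw [show xv j ^ M = U⁻¹ * (U * xv j ^ M) by rw [inv_mul_cancel_left₀ hU], h3,
        Finset.mul_sum]
      exact Finset.sum_congr rfl fun k _ => by ring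
    rw [h2]
    refine Submodule.sum_mem _ fun k hk => ?_
    exact Finset.le_sup (f := fun k => Submodule.map (LinearMap.mulLeft ℤ (U⁻¹ * ℓ.coeff k)) Fm)
      hk ⟨_, hymem (M + k), rfl⟩
  exact aux_integral_of_powers_mem F2 hF2fg hpow

private theorem aux3 (D a : ℝ) (hD : 0 < D) (ha : 0 < a) (hDint : IsIntegral ℤ ((D:ℂ)))
    (haint : IsIntegral ℤ ((a:ℂ))) (s : ℚ) :
    IsIntegral ℚ (((D ^ ((s:ℝ)) * (D / a) ^ (1 - (s:ℝ)) : ℝ) : ℂ)) := by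
  have hzpow : ∀ (z : ℂ), IsIntegral ℚ z → ∀ k : ℤ, IsIntegral ℚ (z ^ k) := by
    intro z hz k
    rcases le_or_gt 0 k with hk | hk
    · lift k to ℕ using hk; rw [zpow_natCast]; exact hz.pow _
    · have h1 : z ^ k = (z ^ (-k).toNat)⁻¹ := by
        rw [← zpow_natCast, Int.toNat_of_nonneg (by omega : (0:ℤ) ≤ -k), zpow_neg, inv_inv]
      rw [h1]
      exact isAlgebraic_iff_isIntegral.mp
        ((isAlgebraic_iff_isIntegral.mpr (hz.pow _)).inv)
  have hnum : (s:ℝ) * (s.den:ℝ) = ((s.num:ℝ)) := by exact_mod_cast Rat.mul_den_eq_num s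
  have hnum2 : (1 - (s:ℝ)) * (s.den:ℝ) = (((s.den:ℤ) - s.num : ℤ):ℝ) := by
    push_cast
    rw [sub_mul, one_mul, hnum]
  have h1 : (D ^ ((s:ℝ)) * (D / a) ^ (1 - (s:ℝ))) ^ (s.den : ℕ)
      = D ^ (s.num) * (D / a) ^ ((s.den : ℤ) - s.num) := by
    rw [mul_pow, ← Real.rpow_natCast (D ^ ((s:ℝ))) s.den,
      ← Real.rpow_natCast ((D/a) ^ (1-(s:ℝ))) s.den,
      ← Real.rpow_mul hD.le, ← Real.rpow_mul (div_pos hD ha).le, hnum, hnum2,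
      Real.rpow_intCast, Real.rpow_intCast]
  have h2 : (((D ^ ((s:ℝ)) * (D / a) ^ (1 - (s:ℝ)) : ℝ)) : ℂ) ^ (s.den:ℕ)
      = ((D:ℂ)) ^ (s.num) * ((D:ℂ) / (a:ℂ)) ^ ((s.den : ℤ) - s.num) := by
    rw [← Complex.ofReal_pow, h1]
    push_cast
    ring
  have hDalg : IsIntegral ℚ ((D:ℂ)) := hDint.tower_top
  have haalg : IsIntegral ℚ ((a:ℂ)) := haint.tower_top
  have hdiv : IsIntegral ℚ ((D:ℂ)/(a:ℂ)) := by
    rw [div_eq_mul_inv]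
    exact hDalg.mul (isAlgebraic_iff_isIntegral.mp (isAlgebraic_iff_isIntegral.mpr haalg).inv)
  have hpowint : IsIntegral ℚ ((((D ^ ((s:ℝ)) * (D / a) ^ (1 - (s:ℝ)) : ℝ)) : ℂ) ^ (s.den:ℕ)) := by
    rw [h2]
    exact (hzpow _ hDalg s.num).mul (hzpow _ hdiv _)
  exact isAlgebraic_iff_isIntegral.mp
    ((isAlgebraic_iff_isIntegral.mpr hpowint).of_pow s.den_pos)

private theorem aux_key {I X : Type*} [Fintype I] (D : ℝ) (hD : 0 < D) (α : X → ℝ)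
    (hα : ∀ x, 0 < α x) (v : X → I → ℂ) (w : I → ℂ) (t : ℝ)
    (n : ℕ) (hn : 2 ≤ n) (ρ : Fin n → X) :
    ((((D ^ (((n : ℝ) - 2) * t) * (∏ k, D / α (ρ k)) ^ (1 - t) : ℝ) : ℂ) *
        ∑ i, (w i) ^ ((2 : ℤ) - (n : ℤ)) * ∏ k, v (ρ k) i) /
       ((((D / α (ρ ⟨0, by omega⟩)) * (D / α (ρ ⟨1, by omega⟩))) ^ (1 - t) : ℝ) : ℂ))
    = ∑ i, v (ρ ⟨0, by omega⟩) i * v (ρ ⟨1, by omega⟩) i *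
        ∏ k ∈ (Finset.univ.erase ⟨0, by omega⟩).erase ⟨1, by omega⟩,
          (((D ^ t * (D / α (ρ k)) ^ (1 - t) : ℝ) : ℂ) * v (ρ k) i / w i) := by
  set i0 : Fin n := ⟨0, by omega⟩ with hi0
  set i1 : Fin n := ⟨1, by omega⟩ with hi1
  have h01 : i1 ≠ i0 := by simp [hi0, hi1, Fin.ext_iff]
  set T : Finset (Fin n) := (Finset.univ.erase i0).erase i1 with hT
  have hmem1 : i1 ∈ Finset.univ.erase i0 := Finset.mem_erase.mpr ⟨h01, Finset.mem_univ _⟩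
  have hTcard : T.card = n - 2 := by
    rw [hT, Finset.card_erase_of_mem hmem1, Finset.card_erase_of_mem (Finset.mem_univ _),
      Finset.card_univ, Fintype.card_fin]
    omega
  have hDk : ∀ x, 0 < D / α x := fun x => div_pos hD (hα x)
  have hprodnn : (0:ℝ) ≤ ∏ k ∈ T, D / α (ρ k) :=
    Finset.prod_nonneg fun k _ => (hDk _).le
  have hsc : (D ^ (((n:ℝ)-2)*t) * (∏ k, D / α (ρ k)) ^ (1-t))
      = ((D/α (ρ i0))*(D/α (ρ i1)))^(1-t)
        * ∏ k ∈ T, (D ^ t * (D/ α (ρ k)) ^ (1-t)) := by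
    have hsplit : (∏ k, D / α (ρ k))
        = (D / α (ρ i0)) * ((D / α (ρ i1)) * ∏ k ∈ T, D / α (ρ k)) := by
      rw [hT]
      rw [← Finset.mul_prod_erase _ _ (Finset.mem_univ i0), ← Finset.mul_prod_erase _ _ hmem1]
    have hD2 : D ^ (((n:ℝ)-2)*t) = (D ^ t) ^ (n - 2 : ℕ) := by
      rw [← Real.rpow_natCast (D ^ t) (n-2), ← Real.rpow_mul hD.le]
      congr 1
      rw [Nat.cast_sub hn]
      push_cast
      ring
    rw [hsplit, Real.mul_rpow (hDk _).le (mul_nonneg (hDk _).le hprodnn),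
      Real.mul_rpow (hDk _).le hprodnn,
      ← Real.finset_prod_rpow T _ (fun k _ => (hDk _).le),
      Real.mul_rpow (hDk _).le (hDk _).le,
      Finset.prod_mul_distrib, Finset.prod_const, hTcard, hD2]
    ring
  have hterm : ∀ i, ((w i) ^ ((2:ℤ) - (n:ℤ)) * ∏ k, v (ρ k) i)
      = v (ρ i0) i * v (ρ i1) i * ∏ k ∈ T, (v (ρ k) i / w i) := by
    intro i
    have hsplit2 : (∏ k, v (ρ k) i)
        = v (ρ i0) i * (v (ρ i1) i * ∏ k ∈ T, v (ρ k) i) := by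
      rw [hT]
      rw [← Finset.mul_prod_erase _ _ (Finset.mem_univ i0), ← Finset.mul_prod_erase _ _ hmem1]
    have hz : (w i) ^ ((2:ℤ) - (n:ℤ)) = ((w i) ^ (n - 2 : ℕ))⁻¹ := by
      rw [← zpow_natCast, ← zpow_neg]
      congr 1
      push_cast [Nat.cast_sub hn]
      ring
    rw [hsplit2, hz, Finset.prod_div_distrib, Finset.prod_const, hTcard]
    ring
  have hBne : ((((D/α (ρ i0))*(D/α (ρ i1)))^(1-t) : ℝ) : ℂ) ≠ 0 := by
    rw [Complex.ofReal_ne_zero]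
    exact (Real.rpow_pos_of_pos (mul_pos (hDk _) (hDk _)) _).ne'
  rw [hsc, Complex.ofReal_mul, mul_assoc, mul_div_cancel_left₀ _ hBne, Finset.mul_sum]
  refine Finset.sum_congr rfl fun i _ => ?_
  rw [hterm i, Complex.ofReal_prod]
  simp only [Complex.ofReal_mul, mul_div_assoc, Finset.prod_mul_distrib]
  ring

theorem isaacs_iff_J_integral {I : Type*} [Fintype I] [DecidableEq I]
    (F : FusionData I)
    {A : Type*} [CommRing A] [Algebra ℂ A] (b : Module.Basis I ℂ A)
    (hb1 : b F.zero = 1)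
    (hbmul : ∀ i j, b i * b j = ∑ m, (F.N i j m : ℂ) • b m)
    -- split semisimplicity: the characters number `|I|` and form a basis of the dual space
    [Fintype (A →ₐ[ℂ] ℂ)]
    (hcard : Fintype.card (A →ₐ[ℂ] ℂ) = Fintype.card I)
    (hind : LinearIndependent ℂ fun ρ : A →ₐ[ℂ] ℂ => (ρ.toLinearMap : A →ₗ[ℂ] ℂ))
    (hspan : ⊤ ≤ Submodule.span ℂ
      (Set.range fun ρ : A →ₐ[ℂ] ℂ => (ρ.toLinearMap : A →ₗ[ℂ] ℂ)))
    -- every character is a *-character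
    (hstarchar : ∀ (ρ : A →ₐ[ℂ] ℂ) (i : I), ρ (b (F.dual i)) = starRingEnd ℂ (ρ (b i)))
    -- the trace decomposition `τ(a) = ∑ ρ, α_ρ⁻¹ ρ(a)`
    (htau : ∀ a : A, (b.repr a F.zero : ℂ)
      = ∑ ρ : A →ₐ[ℂ] ℂ, ((formalCodegree b ρ : ℝ) : ℂ)⁻¹ * ρ a)
    (δ : A →ₐ[ℂ] ℂ) (hδ : ∀ i, δ (b i) ≠ 0)
    (s : ℚ) (hs : (0 : ℚ) ≤ s) :
    (∀ (ρ : A →ₐ[ℂ] ℂ) (i : I),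
      IsIntegral ℤ
        (((formalCodegree b δ ^ ((s : ℝ)) *
           (formalCodegree b δ / formalCodegree b ρ) ^ (1 - (s : ℝ)) : ℝ) : ℂ) *
          ρ (b i) / δ (b i)))
    ↔ (∀ (n : ℕ) (hn : 2 ≤ n) (ρ : Fin n → (A →ₐ[ℂ] ℂ)),
        IsIntegral ℤ
          ((((formalCodegree b δ ^ (((n : ℝ) - 2) * (s : ℝ)) *
              (∏ k, formalCodegree b δ / formalCodegree b (ρ k)) ^ (1 - (s : ℝ)) : ℝ) : ℂ) *
            ∑ i, (δ (b i)) ^ ((2 : ℤ) - (n : ℤ)) * ∏ k, ρ k (b i)) /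
           ((((formalCodegree b δ / formalCodegree b (ρ ⟨0, by omega⟩)) *
              (formalCodegree b δ / formalCodegree b (ρ ⟨1, by omega⟩))) ^
                (1 - (s : ℝ)) : ℝ) : ℂ))) := by
  classical
  -- positivity of formal codegrees
  have hαpos : ∀ ρ : A →ₐ[ℂ] ℂ, 0 < formalCodegree b ρ := by
    intro ρ
    have h1 : (0:ℝ) < Complex.normSq (ρ (b F.zero)) := by
      rw [hb1, map_one]; norm_num
    exact Finset.sum_pos' (fun i _ => Complex.normSq_nonneg _) ⟨F.zero, Finset.mem_univ _, h1⟩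
  -- integrality of character values on basis elements
  have hbint : ∀ (ρ : A →ₐ[ℂ] ℂ) (i : I), IsIntegral ℤ (ρ (b i)) := by
    have hgen : ∀ i j, b i * b j ∈ Submodule.span ℤ (Set.range b) := by
      intro i j
      rw [hbmul]
      refine Submodule.sum_mem _ fun m _ => ?_
      rw [show ((F.N i j m : ℂ)) • b m = (F.N i j m : ℤ) • b m by
        rw [← Int.cast_smul_eq_zsmul ℂ]; norm_num]
      exact Submodule.smul_mem _ _ (Submodule.subset_span ⟨m, rfl⟩)
    have hone : (1 : A) ∈ Submodule.span ℤ (Set.range b) :=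
      hb1 ▸ Submodule.subset_span ⟨F.zero, rfl⟩
    have hmulmem : ∀ x ∈ Submodule.span ℤ (Set.range b), ∀ y ∈ Submodule.span ℤ (Set.range b),
        x * y ∈ Submodule.span ℤ (Set.range b) := by
      intro x hx
      induction hx using Submodule.span_induction with
      | mem x hxg =>
        intro y hy
        induction hy using Submodule.span_induction with
        | mem y hyg =>
          obtain ⟨i, rfl⟩ := hxg; obtain ⟨j, rfl⟩ := hyg; exact hgen i j
        | zero => rw [mul_zero]; exact Submodule.zero_mem _
        | add y z _ _ hy' hz' => rw [mul_add]; exact Submodule.add_mem _ hy' hz'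
        | smul c y _ hy' => rw [mul_smul_comm]; exact Submodule.smul_mem _ _ hy'
      | zero => intro y _; rw [zero_mul]; exact Submodule.zero_mem _
      | add x z _ _ hx' hz' =>
        intro y hy; rw [add_mul]; exact Submodule.add_mem _ (hx' y hy) (hz' y hy)
      | smul c x _ hx' =>
        intro y hy; rw [smul_mul_assoc]; exact Submodule.smul_mem _ _ (hx' y hy)
    let S : Subalgebra ℤ A :=
      { carrier := Submodule.span ℤ (Set.range b)
        mul_mem' := fun hx hy => hmulmem _ hx _ hy
        one_mem' := hone
        add_mem' := fun hx hy => Submodule.add_mem _ hx hy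
        zero_mem' := Submodule.zero_mem _
        algebraMap_mem' := fun n => by
          have h1 : (algebraMap ℤ A) n = n • (1 : A) := by
            rw [zsmul_eq_mul, mul_one]; rfl
          rw [h1]
          exact Submodule.smul_mem _ _ hone }
    have hfg : (Subalgebra.toSubmodule S).FG := by
      refine ⟨Finset.univ.image b, ?_⟩
      show Submodule.span ℤ _ = Submodule.span ℤ (Set.range b)
      rw [Finset.coe_image, Finset.coe_univ, Set.image_univ]
    have hintA : ∀ i, IsIntegral ℤ (b i) := fun i =>
      IsIntegral.of_mem_of_fg S hfg _ (Submodule.subset_span ⟨i, rfl⟩)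
    intro ρ i
    exact (hintA i).map ρ.toRingHom.toIntAlgHom
  -- formal codegrees are algebraic integers
  have hαint : ∀ ρ : A →ₐ[ℂ] ℂ, IsIntegral ℤ ((formalCodegree b ρ : ℝ) : ℂ) := by
    intro ρ
    have heq : ((formalCodegree b ρ : ℝ) : ℂ) = ∑ i, ρ (b i) * ρ (b (F.dual i)) := by
      rw [formalCodegree]
      push_cast
      refine Finset.sum_congr rfl fun i _ => ?_
      rw [hstarchar ρ i, Complex.mul_conj]
    rw [heq]
    exact Subalgebra.sum_mem (integralClosure ℤ ℂ) fun i _ =>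
      Subalgebra.mul_mem _ (hbint ρ i) (hbint ρ (F.dual i))
  -- the key algebraic identity
  have hkeyJ : ∀ (n : ℕ) (hn : 2 ≤ n) (ρ : Fin n → (A →ₐ[ℂ] ℂ)),
      ((((formalCodegree b δ ^ (((n : ℝ) - 2) * (s : ℝ)) *
          (∏ k, formalCodegree b δ / formalCodegree b (ρ k)) ^ (1 - (s : ℝ)) : ℝ) : ℂ) *
        ∑ i, (δ (b i)) ^ ((2 : ℤ) - (n : ℤ)) * ∏ k, ρ k (b i)) /
       ((((formalCodegree b δ / formalCodegree b (ρ ⟨0, by omega⟩)) *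
          (formalCodegree b δ / formalCodegree b (ρ ⟨1, by omega⟩))) ^
            (1 - (s : ℝ)) : ℝ) : ℂ))
      = ∑ i, ρ ⟨0, by omega⟩ (b i) * ρ ⟨1, by omega⟩ (b i) *
          ∏ k ∈ (Finset.univ.erase ⟨0, by omega⟩).erase ⟨1, by omega⟩,
            (((formalCodegree b δ ^ ((s : ℝ)) *
              (formalCodegree b δ / formalCodegree b (ρ k)) ^ (1 - (s : ℝ)) : ℝ) : ℂ) *
              ρ k (b i) / δ (b i)) :=
    fun n hn ρ => aux_key (formalCodegree b δ) (hαpos δ) (formalCodegree b) hαpos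
      (fun x i => x (b i)) (fun i => δ (b i)) ((s : ℝ)) n hn ρ
  constructor
  · -- (a) → (b)
    intro ha n hn ρ
    rw [hkeyJ n hn ρ]
    refine Subalgebra.sum_mem (integralClosure ℤ ℂ) fun i _ => ?_
    refine Subalgebra.mul_mem _ (Subalgebra.mul_mem _ (hbint _ i) (hbint _ i)) ?_
    exact Subalgebra.prod_mem _ fun k _ => ha (ρ k) i
  · -- (b) → (a)
    intro hb ρt j
    set xv : I → ℂ := fun i =>
      ((formalCodegree b δ ^ ((s : ℝ)) *
        (formalCodegree b δ / formalCodegree b ρt) ^ (1 - (s : ℝ)) : ℝ) : ℂ) *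
        ρt (b i) / δ (b i) with hxv
    show IsIntegral ℤ (xv j)
    have hcalg : IsIntegral ℚ
        (((formalCodegree b δ ^ ((s : ℝ)) *
          (formalCodegree b δ / formalCodegree b ρt) ^ (1 - (s : ℝ)) : ℝ) : ℂ)) :=
      aux3 _ _ (hαpos δ) (hαpos ρt) (hαint δ) (hαint ρt) s
    have hQint : ∀ (ρ' : A →ₐ[ℂ] ℂ) (i : I), IsIntegral ℚ (ρ' (b i)) :=
      fun ρ' i => (hbint ρ' i).tower_top
    have hxalg : ∀ i, IsIntegral ℚ (xv i) := by
      intro i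
      rw [hxv]
      simp only
      rw [div_eq_mul_inv]
      exact (hcalg.mul (hQint ρt i)).mul
        (isAlgebraic_iff_isIntegral.mp (isAlgebraic_iff_isIntegral.mpr (hQint δ i)).inv)
    -- find a character σ with nonvanishing coefficient on the level set of xv j
    have hσ : ∃ σ : A →ₐ[ℂ] ℂ,
        (∑ i ∈ Finset.univ.filter (fun i => xv i = xv j), σ (b i) * δ (b i)) ≠ 0 := by
      by_contra hcon
      push_neg at hcon
      set a : A := ∑ i ∈ Finset.univ.filter (fun i => xv i = xv j), δ (b i) • b i with hadef
      have hσa : ∀ σ : A →ₐ[ℂ] ℂ, σ.toLinearMap a = 0 := by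
        intro σ
        have h1 : σ a = ∑ i ∈ Finset.univ.filter (fun i => xv i = xv j),
            δ (b i) * σ (b i) := by
          rw [hadef, map_sum]
          refine Finset.sum_congr rfl fun i _ => ?_
          rw [map_smul, smul_eq_mul]
        calc σ.toLinearMap a = σ a := rfl
          _ = ∑ i ∈ Finset.univ.filter (fun i => xv i = xv j), δ (b i) * σ (b i) := h1
          _ = ∑ i ∈ Finset.univ.filter (fun i => xv i = xv j), σ (b i) * δ (b i) :=
              Finset.sum_congr rfl fun i _ => mul_comm _ _
          _ = 0 := hcon σ
      have hall : ∀ f : A →ₗ[ℂ] ℂ, f ∈ Submodule.span ℂ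
          (Set.range fun ρ' : A →ₐ[ℂ] ℂ => (ρ'.toLinearMap : A →ₗ[ℂ] ℂ)) → f a = 0 := by
        intro f hf
        induction hf using Submodule.span_induction with
        | mem f hfm => obtain ⟨σ, rfl⟩ := hfm; exact hσa σ
        | zero => rfl
        | add f g _ _ hf' hg' => rw [LinearMap.add_apply, hf', hg', add_zero]
        | smul r f _ hf' => rw [LinearMap.smul_apply, hf', smul_zero]
      have hcoord := hall (b.coord j) (hspan Submodule.mem_top)
      rw [Module.Basis.coord_apply, hadef] at hcoord
      simp only [map_sum, map_smul, Module.Basis.repr_self] at hcoord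
      rw [Finsupp.finset_sum_apply] at hcoord
      simp only [Finsupp.smul_single, smul_eq_mul, mul_one, Finsupp.single_apply] at hcoord
      rw [Finset.sum_ite_eq' (Finset.univ.filter (fun i => xv i = xv j))] at hcoord
      have hjmem : j ∈ Finset.univ.filter (fun i => xv i = xv j) :=
        Finset.mem_filter.mpr ⟨Finset.mem_univ _, rfl⟩
      rw [if_pos hjmem] at hcoord
      exact hδ j hcoord
    obtain ⟨σ, hU⟩ := hσ
    -- moments are algebraic integers, from hypothesis (b) via the key identity
    have hy : ∀ m : ℕ, IsIntegral ℤ (∑ i, (σ (b i) * δ (b i)) * xv i ^ m) := by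
      intro m
      have h2 : (2:ℕ) ≤ m + 2 := by omega
      set τ : Fin (m+2) → (A →ₐ[ℂ] ℂ) :=
        fun k => if k.val = 0 then σ else if k.val = 1 then δ else ρt with hτ
      have hbm := hb (m+2) h2 τ
      rw [hkeyJ (m+2) h2 τ] at hbm
      have hτ0 : τ (⟨0, by omega⟩ : Fin (m+2)) = σ := by simp [hτ]
      have hτ1 : τ (⟨1, by omega⟩ : Fin (m+2)) = δ := by simp [hτ]
      have hcardT : ((Finset.univ.erase (⟨0, by omega⟩ : Fin (m+2))).erase
          ⟨1, by omega⟩).card = m := by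
        rw [Finset.card_erase_of_mem
            (Finset.mem_erase.mpr ⟨by simp [Fin.ext_iff], Finset.mem_univ _⟩),
          Finset.card_erase_of_mem (Finset.mem_univ _), Finset.card_univ, Fintype.card_fin]
        omega
      have heq : (∑ i, τ ⟨0, by omega⟩ (b i) * τ ⟨1, by omega⟩ (b i) *
          ∏ k ∈ (Finset.univ.erase ⟨0, by omega⟩).erase ⟨1, by omega⟩,
            (((formalCodegree b δ ^ ((s : ℝ)) *
              (formalCodegree b δ / formalCodegree b (τ k)) ^ (1 - (s : ℝ)) : ℝ) : ℂ) *
              τ k (b i) / δ (b i)))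
          = ∑ i, (σ (b i) * δ (b i)) * xv i ^ m := by
        refine Finset.sum_congr rfl fun i _ => ?_
        rw [hτ0, hτ1]
        congr 1
        have hτk : ∀ k ∈ (Finset.univ.erase (⟨0, by omega⟩ : Fin (m+2))).erase
            ⟨1, by omega⟩, τ k = ρt := by
          intro k hk
          obtain ⟨hk1, hk0, -⟩ :
              k ≠ (⟨1, by omega⟩ : Fin (m+2)) ∧ k ≠ (⟨0, by omega⟩ : Fin (m+2))
                ∧ k ∈ Finset.univ := by
            obtain ⟨h1', h2'⟩ := Finset.mem_erase.mp hk
            obtain ⟨h3', h4'⟩ := Finset.mem_erase.mp h2'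
            exact ⟨h1', h3', h4'⟩
          rw [hτ]
          simp only
          rw [if_neg (fun h => hk0 (Fin.ext h)), if_neg (fun h => hk1 (Fin.ext h))]
        calc (∏ k ∈ (Finset.univ.erase ⟨0, by omega⟩).erase ⟨1, by omega⟩,
              (((formalCodegree b δ ^ ((s : ℝ)) *
                (formalCodegree b δ / formalCodegree b (τ k)) ^ (1 - (s : ℝ)) : ℝ) : ℂ) *
                τ k (b i) / δ (b i)))
            = ∏ _k ∈ (Finset.univ.erase (⟨0, by omega⟩ : Fin (m+2))).erase ⟨1, by omega⟩,
                xv i := by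
              refine Finset.prod_congr rfl fun k hk => ?_
              rw [hτk k hk, hxv]
          _ = xv i ^ m := by rw [Finset.prod_const, hcardT]
      rw [heq] at hbm
      exact hbm
    exact aux_rev (fun i => σ (b i) * δ (b i)) xv j
      (fun i => (hQint σ i).mul (hQint δ i)) hxalg hU hy
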